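/- Let (Γ, ⪯) be a left-ordered group. The ordering ⪯ is Conradian if and only if (Γ, ⪯) admits no crossing. -/

import Mathlib

/-- A crossing for a left-ordered group `(Γ, ≤)`: a 5-tuple `(f, g, u, v, w)` with
`u < w < v`, `gⁿ u < v` and `fⁿ v > u` for every positive integer `n`, and
positive integers `M, N` with `f^N v < w < g^M u`. -/
def IsCrossing {Γ : Type*} [Group Γ] [LinearOrder Γ] (f g u v w : Γ) : Prop :=
  u < w ∧ w < v ∧
  (∀ n : ℕ, 0 < n → g ^ n * u < v ∧ u < f ^ n * v) ∧
  ∃ M N : ℕ, 0 < M ∧ 0 < N ∧ f ^ N * v < w ∧ w < g ^ M * u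

/-- The ordering of a left-ordered group is Conradian if for all positive `f, g`
there is a positive integer `n` with `f * gⁿ > g`. -/
def IsConradian (Γ : Type*) [Group Γ] [LinearOrder Γ] : Prop :=
  ∀ f g : Γ, 1 < f → 1 < g → ∃ n : ℕ, 0 < n ∧ g < f * g ^ n

section Aux

variable {Γ : Type*} [Group Γ] [LinearOrder Γ] [CovariantClass Γ Γ (· * ·) (· ≤ ·)]

private lemma aux_mlt {a b c : Γ} (h : b < c) : a * b < a * c :=
  mul_lt_mul_right h a

private lemma aux_mltc {a b c : Γ} (h : a * b < a * c) : b < c := by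
  have := aux_mlt (a := a⁻¹) h
  simpa [inv_mul_cancel_left] using this

end Aux

/-- The ordering of a left-ordered group is Conradian iff it admits no crossing. -/
theorem isConradian_iff_no_crossing (Γ : Type*) [Group Γ] [LinearOrder Γ]
    [CovariantClass Γ Γ (· * ·) (· ≤ ·)] :
    IsConradian Γ ↔ ∀ f g u v w : Γ, ¬ IsCrossing f g u v w := by
  constructor
  · -- Conradian → no crossing
    intro hC f g u v w hX
    obtain ⟨huw, hwv, hn, M, N, hM, hN, hfNv, hgMu⟩ := hX
    set F := f ^ N with hF
    set G := g ^ M with hG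
    -- powers of F and G still satisfy the crossing bounds
    have hGpow : ∀ n : ℕ, 0 < n → G ^ n * u < v := by
      intro n hn'
      have := (hn (M * n) (Nat.mul_pos hM hn')).1
      simpa [hG, pow_mul] using this
    have hFpow : ∀ n : ℕ, 0 < n → u < F ^ n * v := by
      intro n hn'
      have := (hn (N * n) (Nat.mul_pos hN hn')).2
      simpa [hF, pow_mul] using this
    have hFv_u : u < F * v := by simpa using hFpow 1 Nat.one_pos
    have hFFv_u : u < F * (F * v) := by
      have := hFpow 2 (by norm_num)
      rwa [pow_two, mul_assoc] at this
    -- basepoint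
    set p : Γ := F * v with hp
    -- p < G * p
    have key1 : p < G * p := by
      have h1 : G * u < G * p := aux_mlt hFv_u
      exact lt_trans (lt_trans hfNv hgMu) h1
    -- p < G * (F * p)
    have key2 : p < G * (F * p) := by
      have h1 : G * u < G * (F * p) := aux_mlt hFFv_u
      exact lt_trans (lt_trans hfNv hgMu) h1
    -- G^n * p < v for all n ≥ 1
    have key3 : ∀ n : ℕ, 0 < n → G ^ n * p < v := by
      intro n hn'
      have h1 : G ^ n * p < G ^ n * w := aux_mlt hfNv
      have h2 : G ^ n * w < G ^ n * (G * u) := aux_mlt hgMu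
      have h3 : G ^ n * (G * u) = G ^ (n + 1) * u := by
        rw [pow_succ, mul_assoc]
      have h4 : G ^ (n + 1) * u < v := hGpow (n + 1) (Nat.succ_pos n)
      calc G ^ n * p < G ^ n * w := h1
        _ < G ^ (n + 1) * u := h3 ▸ h2
        _ < v := h4
    -- the non-Conradian pair
    set Y : Γ := p⁻¹ * G * p with hYdef
    set X : Γ := p⁻¹ * (G * (F * p)) with hXdef
    have hY : 1 < Y := by
      have := aux_mlt (a := p⁻¹) key1
      simpa [hYdef, mul_assoc] using this
    have hX1 : 1 < X := by
      have := aux_mlt (a := p⁻¹) key2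
      simpa [hXdef, mul_assoc] using this
    obtain ⟨n, hn0, hlt⟩ := hC X Y hX1 hY
    -- compute X * Y ^ n
    have hYn : Y ^ n = p⁻¹ * G ^ n * p := by
      simpa using conj_pow (a := p⁻¹) (b := G) (i := n)
    have hXYn : X * Y ^ n = p⁻¹ * (G * (F * (G ^ n * p))) := by
      rw [hYn, hXdef]
      group
    -- but X * Y ^ n < Y, contradiction
    have hcontra : X * Y ^ n < Y := by
      rw [hXYn, hYdef, mul_assoc]
      apply aux_mlt
      apply aux_mlt
      have : F * (G ^ n * p) < F * v := aux_mlt (key3 n hn0)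
      exact this
    exact lt_asymm hlt hcontra
  · -- no crossing → Conradian
    intro h f g hf hg
    by_contra hcon
    push_neg at hcon
    have hle : ∀ n : ℕ, 0 < n → f * g ^ n ≤ g := by
      intro n hn
      exact hcon n hn
    have h1 : f * g < g := by
      have h1' : f * g ≤ g := by simpa using hle 1 Nat.one_pos
      rcases lt_or_eq_of_le h1' with h | h
      · exact h
      · exfalso
        have : f = 1 := mul_right_cancel (b := g) (by simpa using h)
        rw [this] at hf
        exact lt_irrefl _ hf
    have h2 : f * (g * g) ≤ g := by
      have := hle 2 (by norm_num)
      rwa [pow_two] at this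
    have hfg1 : (1 : Γ) < f * g := by
      have : f * 1 < f * g := aux_mlt hg
      rw [mul_one] at this
      exact lt_trans hf this
    -- (f*g)^n < g for all n ≥ 1
    have hA : ∀ n : ℕ, 0 < n → (f * g) ^ n < g := by
      intro n hn
      induction n with
      | zero => exact absurd hn (lt_irrefl 0)
      | succ k ih =>
        rcases Nat.eq_zero_or_pos k with h0 | hk
        · subst h0; simpa using h1
        · have hik := ih hk
          have : (f * g) ^ (k + 1) = (f * g) * (f * g) ^ k := pow_succ' _ _
          rw [this]
          calc (f * g) * (f * g) ^ k < (f * g) * g := aux_mlt hik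
            _ = f * (g * g) := by rw [mul_assoc]
            _ ≤ g := h2
    apply h f (f * g) 1 g (f * g)
    refine ⟨hfg1, h1, ?_, 2, 2, by norm_num, by norm_num, ?_, ?_⟩
    · intro n hn
      constructor
      · rw [mul_one]; exact hA n hn
      · have hfn : (1 : Γ) < f ^ n := one_lt_pow' hf hn.ne'
        have : f ^ n * 1 < f ^ n * g := aux_mlt hg
        rw [mul_one] at this
        exact lt_trans hfn this
    · have : f ^ 2 * g = f * (f * g) := by rw [pow_two, mul_assoc]
      rw [this]
      exact aux_mlt h1
    · have : (f * g) ^ 2 * 1 = (f * g) * (f * g) := by rw [pow_two, mul_one]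
      rw [this]
      have := aux_mlt (a := f * g) hfg1
      simpa using this
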